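/- For all positive integers k, the k-th positive element of the greedy B_2-set satisfies γ_k(2) ≤ (1/2)·k^3 + (1/2)·k. -/

import Mathlib

/-- A set `A` of nonnegative integers is a `B_h`-set if every solution to
`a_1 + ... + a_h = b_1 + ... + b_h` with all `a_i, b_i ∈ A` has
`{a_1, ..., a_h} = {b_1, ..., b_h}` as multisets. -/
def IsBhSet (h : ℕ) (A : Set ℕ) : Prop :=
  ∀ a b : Fin h → ℕ, (∀ i, a i ∈ A) → (∀ i, b i ∈ A) →
    (∑ i, a i) = (∑ i, b i) →
    Multiset.map a Finset.univ.val = Multiset.map b Finset.univ.val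

/-- Auxiliary construction of the greedy `B_h`-set: `greedyAux h k` is the pair
consisting of the `k`-th element `γ_k(h)` of the greedy `B_h`-set together with
the finite set `{γ_0(h), ..., γ_k(h)}`.  We have `γ_0(h) = 0`, `γ_1(h) = 1`, and
for `k ≥ 1`, `γ_{k+1}(h)` is the smallest integer greater than `γ_k(h)` such
that `{γ_0(h), ..., γ_k(h), γ_{k+1}(h)}` is a `B_h`-set. -/
noncomputable def greedyAux (h : ℕ) : ℕ → ℕ × Finset ℕ
  | 0 => (0, {0})
  | (k + 1) =>
    let p := greedyAux h k
    let g := if k = 0 then 1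
      else sInf {x : ℕ | p.1 < x ∧ IsBhSet h ((insert x p.2 : Finset ℕ) : Set ℕ)}
    (g, insert g p.2)

/-- `greedy h k` is the `k`-th element `γ_k(h)` of the greedy `B_h`-set. -/
noncomputable def greedy (h k : ℕ) : ℕ := (greedyAux h k).1

def Sidon (A : Set ℕ) : Prop :=
  ∀ a ∈ A, ∀ b ∈ A, ∀ c ∈ A, ∀ d ∈ A, a + b = c + d → (a = c ∧ b = d) ∨ (a = d ∧ b = c)

lemma univ_fin2 : (Finset.univ.val : Multiset (Fin 2)) = {0, 1} := by decide

lemma map_fin2 (a : Fin 2 → ℕ) :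
    Multiset.map a (Finset.univ.val : Multiset (Fin 2)) = {a 0, a 1} := by
  rw [univ_fin2]
  simp [Multiset.insert_eq_cons]

lemma pair_eq {p q r s : ℕ} (h : ({p, q} : Multiset ℕ) = {r, s}) :
    (p = r ∧ q = s) ∨ (p = s ∧ q = r) := by
  simp only [Multiset.insert_eq_cons, Multiset.cons_eq_cons] at h
  rcases h with ⟨h1, h2⟩ | ⟨hne, cs, h1, h2⟩
  · exact Or.inl ⟨h1, Multiset.singleton_inj.mp h2⟩
  · rw [Multiset.singleton_eq_cons_iff] at h1 h2
    exact Or.inr ⟨h2.1.symm, h1.1⟩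

lemma isBhSet_two_iff (S : Set ℕ) : IsBhSet 2 S ↔ Sidon S := by
  constructor
  · intro h a ha b hb c hc d hd hsum
    have := h ![a, b] ![c, d] (by intro i; fin_cases i <;> simpa) (by intro i; fin_cases i <;> simpa)
      (by simp [Fin.sum_univ_two, hsum])
    rw [map_fin2, map_fin2] at this
    simpa using pair_eq this
  · intro h a b ha hb hsum
    rw [Fin.sum_univ_two, Fin.sum_univ_two] at hsum
    rw [map_fin2, map_fin2]
    rcases h (a 0) (ha 0) (a 1) (ha 1) (b 0) (hb 0) (b 1) (hb 1) hsum with ⟨h1, h2⟩ | ⟨h1, h2⟩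
    · rw [h1, h2]
    · rw [h1, h2, Multiset.pair_comm]


noncomputable def gam (k : ℕ) : ℕ := greedy 2 k
noncomputable def gset (k : ℕ) : Finset ℕ := (greedyAux 2 k).2

lemma gam_zero : gam 0 = 0 := rfl
lemma gset_zero : gset 0 = {0} := rfl
lemma gam_one : gam 1 = 1 := by simp [gam, greedy, greedyAux]
lemma gset_succ (k : ℕ) : gset (k + 1) = insert (gam (k + 1)) (gset k) := rfl

lemma gam_succ (k : ℕ) (hk : 1 ≤ k) :
    gam (k + 1) = sInf {x : ℕ | gam k < x ∧ IsBhSet 2 ((insert x (gset k) : Finset ℕ) : Set ℕ)} := by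
  have : k ≠ 0 := by omega
  simp [gam, greedy, greedyAux, this, gset]

lemma sidon_insert_big {A : Finset ℕ} {g x : ℕ} (hbd : ∀ y ∈ A, y ≤ g)
    (hA : Sidon ↑A) (hx : 2 * g < x) : Sidon ↑(insert x A) := by
  intro a ha b hb c hc d hd hsum
  simp only [Finset.coe_insert, Set.mem_insert_iff, Finset.mem_coe] at ha hb hc hd
  rcases ha with ha | ha <;> rcases hb with hb | hb <;> rcases hc with hc | hc <;>
    rcases hd with hd | hd
  all_goals try exact hA a ha b hb c hc d hd hsum
  all_goals try have B1 := hbd a ha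
  all_goals try have B2 := hbd b hb
  all_goals try have B3 := hbd c hc
  all_goals try have B4 := hbd d hd
  all_goals omega

lemma sidon01 : Sidon ↑(insert 1 ({0} : Finset ℕ)) := by
  intro a ha b hb c hc d hd hsum
  simp only [Finset.coe_insert, Set.mem_insert_iff, Finset.coe_singleton,
    Set.mem_singleton_iff] at ha hb hc hd
  omega

lemma main_inv (k : ℕ) :
    Sidon ↑(gset k) ∧ (∀ y ∈ gset k, y ≤ gam k) ∧ gam k < gam (k + 1) := by
  induction k with
  | zero =>
    refine ⟨?_, ?_, ?_⟩
    · intro a ha b hb c hc d hd hsum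
      simp only [gset_zero, Finset.coe_singleton, Set.mem_singleton_iff] at ha hb hc hd
      omega
    · intro y hy
      simp only [gset_zero, Finset.mem_singleton] at hy
      simp [hy, gam_zero]
    · rw [gam_zero, gam_one]; omega
  | succ k ih =>
    obtain ⟨hS, hB, hlt⟩ := ih
    have hstep : Sidon ↑(gset (k + 1)) ∧ (∀ y ∈ gset (k + 1), y ≤ gam (k + 1)) := by
      rcases Nat.eq_zero_or_pos k with rfl | hk
      · constructor
        · rw [gset_succ, gam_one, gset_zero]
          exact sidon01
        · intro y hy
          rw [gset_succ, gset_zero] at hy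
          simp only [Finset.mem_insert, Finset.mem_singleton] at hy
          have h1 : gam (0 + 1) = 1 := gam_one
          omega
      · have hs := gam_succ k hk
        have hne : {x : ℕ | gam k < x ∧
            IsBhSet 2 ((insert x (gset k) : Finset ℕ) : Set ℕ)}.Nonempty := by
          refine ⟨2 * gam k + 1, ?_, ?_⟩
          · omega
          · exact (isBhSet_two_iff _).mpr (sidon_insert_big hB hS (by omega))
        have hmem := Nat.sInf_mem hne
        rw [← hs] at hmem
        obtain ⟨hlt', hbh⟩ := hmem
        constructor
        · rw [gset_succ]
          exact (isBhSet_two_iff _).mp hbh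
        · intro y hy
          rw [gset_succ] at hy
          rcases Finset.mem_insert.mp hy with rfl | hy
          · exact le_rfl
          · exact le_of_lt (lt_of_le_of_lt (hB y hy) hlt')
    obtain ⟨hS1, hB1⟩ := hstep
    refine ⟨hS1, hB1, ?_⟩
    have hs := gam_succ (k + 1) (by omega)
    have hne : {x : ℕ | gam (k + 1) < x ∧
        IsBhSet 2 ((insert x (gset (k + 1)) : Finset ℕ) : Set ℕ)}.Nonempty := by
      refine ⟨2 * gam (k + 1) + 1, ?_, ?_⟩
      · omega
      · exact (isBhSet_two_iff _).mpr (sidon_insert_big hB1 hS1 (by omega))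
    have hmem := Nat.sInf_mem hne
    rw [← hs] at hmem
    exact hmem.1

lemma gam_lt_succ (k : ℕ) : gam k < gam (k + 1) := (main_inv k).2.2
lemma gset_sidon (k : ℕ) : Sidon ↑(gset k) := (main_inv k).1
lemma gset_bound (k : ℕ) : ∀ y ∈ gset k, y ≤ gam k := (main_inv k).2.1

lemma gam_mono {j k : ℕ} (h : j ≤ k) : gam j ≤ gam k := by
  induction k with
  | zero => simpa [Nat.le_zero.mp h]
  | succ k ih =>
    rcases Nat.lt_or_ge j (k + 1) with h' | h'
    · exact le_trans (ih (by omega)) (le_of_lt (gam_lt_succ k))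
    · have : j = k + 1 := by omega
      simp [this]

lemma gset_mono {j k : ℕ} (h : j ≤ k) : gset j ⊆ gset k := by
  induction k with
  | zero => simp [Nat.le_zero.mp h]
  | succ k ih =>
    rcases Nat.lt_or_ge j (k + 1) with h' | h'
    · exact subset_trans (ih (by omega)) (by rw [gset_succ]; exact Finset.subset_insert _ _)
    · have : j = k + 1 := by omega
      simp [this]

lemma gset_card (k : ℕ) : (gset k).card = k + 1 := by
  induction k with
  | zero => simp [gset_zero]
  | succ k ih =>
    rw [gset_succ, Finset.card_insert_of_notMem, ih]
    intro hmem
    exact absurd (gset_bound k _ hmem) (by have := gam_lt_succ k; omega)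

lemma gam_notmem_skip {k x : ℕ} (hk : 1 ≤ k) (h1 : gam k < x) (h2 : x < gam (k + 1)) :
    ¬ Sidon ↑(insert x (gset k)) := by
  intro hsid
  have hs := gam_succ k hk
  have : x ∈ {x : ℕ | gam k < x ∧ IsBhSet 2 ((insert x (gset k) : Finset ℕ) : Set ℕ)} :=
    ⟨h1, (isBhSet_two_iff _).mpr hsid⟩
  have := Nat.sInf_le this
  omega

lemma exists_skip_interval {K x : ℕ} (hK : 1 ≤ K) (hx : x ≤ gam K) (hnx : x ∉ gset K) :
    ∃ j, 1 ≤ j ∧ j + 1 ≤ K ∧ gam j < x ∧ x < gam (j + 1) := by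
  induction K with
  | zero => omega
  | succ K ih =>
    rcases Nat.eq_zero_or_pos K with rfl | hK1
    · exfalso
      have h1 : gam (0 + 1) = 1 := gam_one
      have : x = 0 ∨ x = 1 := by omega
      rcases this with rfl | rfl
      · have h0 : (0 : ℕ) ∈ gset 0 := by simp [gset_zero]
        exact hnx (gset_mono (Nat.zero_le _) h0)
      · have : (1 : ℕ) ∈ gset (0 + 1) := by
          rw [gset_succ]
          simp [h1]
        exact hnx this
    · have hxne : x ≠ gam (K + 1) := by
        intro h
        subst h
        exact hnx (by rw [gset_succ]; exact Finset.mem_insert_self _ _)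
      rcases Nat.lt_or_ge (gam K) x with h' | h'
      · exact ⟨K, hK1, by omega, h', by omega⟩
      · obtain ⟨j, hj⟩ := ih hK1 h' (fun hc => hnx (gset_mono (by omega) hc))
        exact ⟨j, hj.1, by omega, hj.2.2⟩

lemma exists_triple {A : Finset ℕ} {g x : ℕ} (hbd : ∀ y ∈ A, y ≤ g) (hA : Sidon ↑A)
    (hx : g < x) (hnot : ¬ Sidon ↑(insert x A)) :
    ∃ a ∈ A, ∃ b ∈ A, ∃ c ∈ A, a < b ∧ b ≤ c ∧ x + a = b + c := by
  have H : ∃ q ∈ A, ∃ r ∈ A, ∃ s ∈ A, x + q = r + s := by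
    unfold Sidon at hnot
    push_neg at hnot
    obtain ⟨p, hp, q, hq, r, hr, s, hs, hsum, hne⟩ := hnot
    simp only [Finset.coe_insert, Set.mem_insert_iff, Finset.mem_coe] at hp hq hr hs
    rcases hp with hp | hp <;> rcases hq with hq | hq <;> rcases hr with hr | hr <;>
      rcases hs with hs | hs
    all_goals try have B1 := hbd p hp
    all_goals try have B2 := hbd q hq
    all_goals try have B3 := hbd r hr
    all_goals try have B4 := hbd s hs
    all_goals first
      | (exfalso; omega)
      | exact ⟨q, hq, r, hr, s, hs, by omega⟩
      | exact ⟨p, hp, r, hr, s, hs, by omega⟩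
      | exact ⟨s, hs, p, hp, q, hq, by omega⟩
      | exact ⟨r, hr, p, hp, q, hq, by omega⟩
      | exact absurd (hA p hp q hq r hr s hs hsum) (by tauto)
  obtain ⟨q, hq, r, hr, s, hs, heq⟩ := H
  have B2 := hbd q hq
  have B3 := hbd r hr
  have B4 := hbd s hs
  rcases le_total r s with h | h
  · exact ⟨q, hq, r, hr, s, hs, by omega, h, heq⟩
  · exact ⟨q, hq, s, hs, r, hr, by omega, h, by omega⟩

open Finset in
lemma card_lt_pairs (s : Finset ℕ) :
    ((s ×ˢ s).filter fun p => p.1 < p.2).card ≤ s.card * (s.card - 1) / 2 := by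
  classical
  have hmaps : ∀ p ∈ (s ×ˢ s).filter fun p => p.1 < p.2,
      ({p.1, p.2} : Finset ℕ) ∈ s.powersetCard 2 := by
    intro p hp
    rw [mem_filter, mem_product] at hp
    rw [mem_powersetCard]
    refine ⟨?_, ?_⟩
    · intro y hy
      rcases Finset.mem_insert.mp hy with rfl | hy
      · exact hp.1.1
      · rw [Finset.mem_singleton] at hy
        subst hy
        exact hp.1.2
    · exact Finset.card_pair (by omega)
  have hinj : Set.InjOn (fun p : ℕ × ℕ => ({p.1, p.2} : Finset ℕ))
      ↑((s ×ˢ s).filter fun p => p.1 < p.2) := by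
    intro p hp q hq heq
    simp only [Finset.coe_filter, Set.mem_setOf_eq] at hp hq
    obtain ⟨a, b⟩ := p
    obtain ⟨c, d⟩ := q
    simp only at heq hp hq
    have h1 : a ∈ ({c, d} : Finset ℕ) := by rw [← heq]; simp
    have h2 : b ∈ ({c, d} : Finset ℕ) := by rw [← heq]; simp
    have h3 : c ∈ ({a, b} : Finset ℕ) := by rw [heq]; simp
    have h4 : d ∈ ({a, b} : Finset ℕ) := by rw [heq]; simp
    simp only [Finset.mem_insert, Finset.mem_singleton] at h1 h2 h3 h4
    simp only [Prod.mk.injEq]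
    omega
  calc ((s ×ˢ s).filter fun p => p.1 < p.2).card
      ≤ (s.powersetCard 2).card := Finset.card_le_card_of_injOn _ hmaps hinj
    _ = s.card.choose 2 := Finset.card_powersetCard 2 s
    _ = s.card * (s.card - 1) / 2 := Nat.choose_two_right _

open Finset in
lemma two_gam_le (m : ℕ) : 2 * gam (m + 1) ≤ (m + 1) ^ 3 + (m + 1) := by
  classical
  set B : Finset ℕ := gset m with hBdef
  have hBcard : B.card = m + 1 := gset_card m
  set P : Finset (ℕ × ℕ) := (B ×ˢ B).filter (fun p => p.1 < p.2) with hPdef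
  set T : Finset (ℕ × ℕ × ℕ) :=
    (B ×ˢ B ×ˢ B).filter (fun t => t.1 < t.2.1 ∧ t.2.1 ≤ t.2.2) with hTdef
  set skipped : Finset ℕ :=
    (Finset.Iic (gam (m + 1))).filter (fun x => x ∉ gset (m + 1)) with hSdef
  -- Step A
  have hA : gam (m + 1) + 1 ≤ (m + 2) + skipped.card := by
    have h1 : (Finset.Iic (gam (m + 1))).card = gam (m + 1) + 1 := Nat.card_Iic _
    have h2 : Finset.Iic (gam (m + 1)) ⊆ gset (m + 1) ∪ skipped := by
      intro x hx
      by_cases h : x ∈ gset (m + 1)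
      · exact Finset.mem_union_left _ h
      · refine Finset.mem_union_right _ ?_
        rw [hSdef, Finset.mem_filter]
        exact ⟨hx, h⟩
    have h3 := Finset.card_le_card h2
    have h4 := Finset.card_union_le (gset (m + 1)) skipped
    have h5 : (gset (m + 1)).card = m + 2 := gset_card (m + 1)
    omega
  -- Step B
  have hex : ∀ x ∈ skipped, ∃ t : ℕ × ℕ × ℕ, t ∈ T ∧ x + t.1 = t.2.1 + t.2.2 := by
    intro x hx
    rw [hSdef, Finset.mem_filter, Finset.mem_Iic] at hx
    obtain ⟨hxle, hxn⟩ := hx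
    obtain ⟨j, hj1, hj2, hj3, hj4⟩ := exists_skip_interval (by omega) hxle hxn
    have hns := gam_notmem_skip hj1 hj3 hj4
    obtain ⟨a, ha, b, hb, c, hc, hab, hbc, heq⟩ :=
      exists_triple (gset_bound j) (gset_sidon j) hj3 hns
    have hsub : gset j ⊆ B := gset_mono (by omega)
    refine ⟨(a, b, c), ?_, heq⟩
    rw [hTdef, Finset.mem_filter, Finset.mem_product, Finset.mem_product]
    exact ⟨⟨hsub ha, hsub hb, hsub hc⟩, hab, hbc⟩
  -- Step C
  have hC : skipped.card ≤ T.card := by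
    let f : ℕ → ℕ × ℕ × ℕ := fun x =>
      if h : ∃ t : ℕ × ℕ × ℕ, t ∈ T ∧ x + t.1 = t.2.1 + t.2.2 then h.choose else (0, 0, 0)
    have hf : ∀ x ∈ skipped, f x ∈ T ∧ x + (f x).1 = (f x).2.1 + (f x).2.2 := by
      intro x hx
      have hext : ∃ t : ℕ × ℕ × ℕ, t ∈ T ∧ x + t.1 = t.2.1 + t.2.2 := hex x hx
      simp only [f, dif_pos hext]
      exact hext.choose_spec
    exact Finset.card_le_card_of_injOn f (fun x hx => (hf x hx).1)
      (fun x hx y hy hxy => by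
        have h1 := (hf x hx).2
        have h2 := (hf y hy).2
        rw [hxy] at h1
        omega)
  -- Step D
  have hD : T.card ≤ P.card * (m + 1) := by
    have : T.card ≤ (P ×ˢ B).card := by
      apply Finset.card_le_card_of_injOn (fun t => ((t.1, t.2.1), t.2.2))
      · intro t ht
        simp only [Finset.mem_coe, hTdef, Finset.mem_filter, Finset.mem_product] at ht
        simp only [Finset.mem_coe, Finset.mem_product, hPdef, Finset.mem_filter]
        exact ⟨⟨⟨ht.1.1, ht.1.2.1⟩, ht.2.1⟩, ht.1.2.2⟩
      · intro t ht u hu heq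
        obtain ⟨a, b, c⟩ := t
        obtain ⟨d, e, g⟩ := u
        simp only [Prod.mk.injEq] at heq ⊢
        exact ⟨heq.1.1, heq.1.2, heq.2⟩
    calc T.card ≤ (P ×ˢ B).card := this
      _ = P.card * (m + 1) := by rw [Finset.card_product, hBcard]
  -- Step E
  have hE : 2 * P.card ≤ (m + 1) * m := by
    have h1 : P.card ≤ (m + 1) * m / 2 := by
      have := card_lt_pairs B
      rw [hBcard] at this
      simpa using this
    have h2 : (m + 1) * m / 2 * 2 ≤ (m + 1) * m := Nat.div_mul_le_self _ _
    omega
  -- Final arithmetic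
  have hP1 : 2 * T.card ≤ (m + 1) * m * (m + 1) := by
    calc 2 * T.card ≤ 2 * (P.card * (m + 1)) := by omega
      _ = (2 * P.card) * (m + 1) := by ring
      _ ≤ ((m + 1) * m) * (m + 1) := Nat.mul_le_mul_right _ hE
  nlinarith [hA, hC, hP1]

theorem stmt_7 (k : ℕ) (hk : 1 ≤ k) :
    (greedy 2 k : ℚ) ≤ (1 / 2) * (k : ℚ) ^ 3 + (1 / 2) * (k : ℚ) := by
  obtain ⟨m, rfl⟩ : ∃ m, k = m + 1 := ⟨k - 1, by omega⟩
  have h := two_gam_le m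
  have h2 : ((2 * gam (m + 1) : ℕ) : ℚ) ≤ (((m + 1) ^ 3 + (m + 1) : ℕ) : ℚ) :=
    Nat.cast_le.mpr h
  show ((gam (m + 1) : ℕ) : ℚ) ≤ _
  push_cast at h2 ⊢
  linarith
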